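/- Let X and Y be complex Hilbert spaces, T : X → Y a bounded linear operator, and x† ∈ X with T*T x† = T*y for some y ∈ Y. For α > 0 let x_α be the unique solution of (T*T + αI)x_α = T*y. Suppose φ : [0,∞) → ℝ is continuous with φ(0) = 0 and φ(λ) > 0 for λ > 0, and there is a constant c₀ > 0 such that α·φ(λ)/(λ + α) ≤ c₀·φ(α) for all α > 0 and λ > 0. If x† = φ(T*T)u for some u ∈ X, where φ(T*T) is defined by the continuous functional calculus applied to the self-adjoint operator T*T, then ‖x† − x_α‖ ≤ c₀‖u‖φ(α) for every α > 0. -/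

import Mathlib

set_option maxHeartbeats 1000000


open ContinuousLinearMap

theorem tikhonov_source_condition_rate
    {X Y : Type*} [NormedAddCommGroup X] [InnerProductSpace ℂ X] [CompleteSpace X]
    [NormedAddCommGroup Y] [InnerProductSpace ℂ Y] [CompleteSpace Y]
    (T : X →L[ℂ] Y) (y : Y) (xdag : X)
    (hxdag : (adjoint T ∘L T) xdag = adjoint T y)
    (xa : ℝ → X)
    (hxa : ∀ α > (0 : ℝ), (adjoint T ∘L T) (xa α) + α • xa α = adjoint T y)
    (φ : ℝ → ℝ) (hφcont : ContinuousOn φ (Set.Ici 0)) (hφ0 : φ 0 = 0)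
    (hφpos : ∀ l > (0 : ℝ), 0 < φ l)
    (c₀ : ℝ) (hc₀ : 0 < c₀)
    (hsrc : ∀ α > (0 : ℝ), ∀ l > (0 : ℝ), α * φ l / (l + α) ≤ c₀ * φ α)
    (u : X) (hu : xdag = cfc φ (adjoint T ∘L T) u) :
    ∀ α > (0 : ℝ), ‖xdag - xa α‖ ≤ c₀ * ‖u‖ * φ α := by
  intro α hα
  set a : X →L[ℂ] X := adjoint T ∘L T with ha_def
  have hsa : IsSelfAdjoint a := by
    rw [isSelfAdjoint_iff']
    simp only [ha_def, adjoint_comp, adjoint_adjoint]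
  have hpos : a.IsPositive := ⟨isSelfAdjoint_iff_isSymmetric.mp hsa, fun x => by
    simp only [reApplyInnerSelf_apply, ha_def, comp_apply]
    rw [adjoint_inner_left]
    exact inner_self_nonneg⟩
  have hspec : ∀ l ∈ spectrum ℝ a, 0 ≤ l :=
    SpectrumRestricts.nnreal_iff.mp hpos.spectrumRestricts
  set g : ℝ → ℝ := fun l => α * φ l / (l + α) with hg_def
  have hφc : ContinuousOn φ (spectrum ℝ a) := hφcont.mono (fun l hl => hspec l hl)
  have hgc : ContinuousOn g (spectrum ℝ a) := by
    apply ContinuousOn.div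
    · exact continuousOn_const.mul hφc
    · exact continuousOn_id.add continuousOn_const
    · intro l hl; have := hspec l hl; positivity
  -- key operator identity
  have hkey : a * cfc g a + α • cfc g a = α • cfc φ a := by
    have h1 : a * cfc g a = cfc (fun l => l * g l) a := by
      rw [cfc_mul (fun l : ℝ => l) g a continuousOn_id hgc, cfc_id' ℝ a]
    have h2 : α • cfc g a = cfc (fun l => α * g l) a := (cfc_const_mul α g a hgc).symm
    rw [h1, h2, ← cfc_add a (fun l => l * g l) (fun l => α * g l)
      (continuousOn_id.mul hgc) (continuousOn_const.mul hgc),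
      ← cfc_const_mul α φ a hφc]
    apply cfc_congr
    intro l hl
    have hl0 := hspec l hl
    have hlα : l + α > 0 := by linarith
    simp only [hg_def]
    field_simp
  set w : X := cfc g a u with hw_def
  have hw : a w + α • w = α • xdag := by
    have := congrArg (fun S : X →L[ℂ] X => S u) hkey
    simpa [hu, mul_apply] using this
  have hv : a (xdag - xa α) + α • (xdag - xa α) = α • xdag := by
    have h2 := hxa α hα
    simp only [map_sub, smul_sub]
    rw [hxdag]
    have : a (xa α) = adjoint T y - α • xa α := by
      rw [← h2]; abel
    rw [this]
    abel
  -- injectivity of a + α • 1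
  have hinj : xdag - xa α = w := by
    set z : X := (xdag - xa α) - w with hz_def
    have hz : a z + α • z = 0 := by
      have e1 : a z + α • z
          = (a (xdag - xa α) + α • (xdag - xa α)) - (a w + α • w) := by
        simp only [hz_def, map_sub, smul_sub]; abel
      rw [e1, hv, hw, sub_self]
    have hzip : (0:ℝ) = ‖T z‖ ^ 2 + α * ‖z‖ ^ 2 := by
      have h0 : inner ℂ (a z + α • z) z = (0 : ℂ) := by rw [hz]; simp
      have h1 : inner ℂ (a z) z = (inner ℂ (T z) (T z) : ℂ) := by
        simp only [ha_def, comp_apply]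
        rw [adjoint_inner_left]
      rw [inner_add_left, h1, RCLike.real_smul_eq_coe_smul (K := ℂ) α z,
        inner_smul_left] at h0
      have h3 := congrArg (RCLike.re (K := ℂ)) h0
      simp only [map_add, map_zero, RCLike.mul_re, RCLike.conj_ofReal, RCLike.ofReal_re,
        RCLike.ofReal_im, zero_mul, sub_zero, inner_self_eq_norm_sq] at h3
      linarith [h3]
    have hz0 : z = 0 := by
      have h1 : (0:ℝ) ≤ ‖T z‖ ^ 2 := by positivity
      have h2 : α * ‖z‖ ^ 2 ≤ 0 := by linarith
      have h3 : ‖z‖ ^ 2 ≤ 0 := by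
        by_contra h
        push_neg at h
        nlinarith
      have : ‖z‖ = 0 := by nlinarith [norm_nonneg z, sq_nonneg ‖z‖]
      simpa using this
    have : xdag - xa α - w = 0 := hz0
    linear_combination (norm := abel) this
  -- norm bound
  have hφα : 0 < φ α := hφpos α hα
  have hbound : ‖cfc g a‖ ≤ c₀ * φ α := by
    apply norm_cfc_le (by positivity)
    intro l hl
    have hl0 := hspec l hl
    rcases eq_or_lt_of_le hl0 with h | h
    · simp only [hg_def, ← h, hφ0]
      simp
      positivity
    · have hgl : 0 ≤ g l := by
        have := (hφpos l h).le
        simp only [hg_def]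
        positivity
      rw [Real.norm_eq_abs, abs_of_nonneg hgl]
      exact hsrc α hα l h
  calc ‖xdag - xa α‖ = ‖(cfc g a) u‖ := by rw [hinj]
    _ ≤ ‖cfc g a‖ * ‖u‖ := (cfc g a).le_opNorm u
    _ ≤ (c₀ * φ α) * ‖u‖ := by
        apply mul_le_mul_of_nonneg_right hbound (norm_nonneg u)
    _ = c₀ * ‖u‖ * φ α := by ring
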